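/- Let R be a ring with identity and A a two-sided ideal of R. Suppose there exist integers s > 1 such that x^s ≡ x (mod A) for all x ∈ R. Then the quotient ring R/A is commutative. -/

import Mathlib

open Polynomial


lemma finite_closure_of_mulClosed {D : Type*} [Ring D] (p : ℕ) (hp : p ≠ 0) [CharP D p]
    (G : Finset D) (h1 : (1 : D) ∈ G) (hmul : ∀ x ∈ G, ∀ y ∈ G, x * y ∈ G) :
    ((Subring.closure (G : Set D) : Set D)).Finite := by
  haveI : NeZero p := ⟨hp⟩
  by_cases hp1 : p = 1
  · have : (1 : D) = 0 := by
      have := CharP.cast_eq_zero_iff D p 1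
      simp [hp1] at this
      exact_mod_cast this
    haveI : Subsingleton D := subsingleton_of_zero_eq_one this.symm
    haveI : Finite D := Finite.of_subsingleton
    exact Set.toFinite _
  have hp2 : 1 < p := by omega
  have hps : ∀ x : D, p • x = 0 := by
    intro x; rw [nsmul_eq_mul, CharP.cast_eq_zero, zero_mul]
  have hmod : ∀ (k : ℕ) (x : D), k • x = (k % p) • x := by
    intro k x
    conv_lhs => rw [← Nat.div_add_mod k p]
    rw [add_nsmul, mul_nsmul, hps, smul_zero, zero_add]
  set S : AddSubmonoid D := AddSubmonoid.closure (G : Set D) with hS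
  have hGS : (G : Set D) ⊆ S := AddSubmonoid.subset_closure
  have hSmul : ∀ x ∈ S, ∀ y ∈ S, x * y ∈ S := by
    intro x hx
    induction hx using AddSubmonoid.closure_induction with
    | mem a ha =>
      intro y hy
      induction hy using AddSubmonoid.closure_induction with
      | mem b hb => exact hGS (hmul a ha b hb)
      | zero => simpa using (zero_mem S)
      | add b c _ _ hb hc => rw [mul_add]; exact add_mem hb hc
    | zero => intro y hy; simpa using (zero_mem S)
    | add a b _ _ ha hb => intro y hy; rw [add_mul]; exact add_mem (ha y hy) (hb y hy)
  have hSneg : ∀ x ∈ S, -x ∈ S := by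
    intro x hx
    have h2 : (p - 1) • x + x = 0 := by
      rw [← succ_nsmul, Nat.sub_add_cancel (by omega)]
      exact hps x
    have h3 : -x = (p - 1) • x := (eq_neg_of_add_eq_zero_left h2).symm
    rw [h3]
    exact nsmul_mem hx _
  -- S as a subring
  let Sring : Subring D :=
    { carrier := (S : Set D)
      one_mem' := hGS h1
      mul_mem' := fun hx hy => hSmul _ hx _ hy
      add_mem' := fun hx hy => add_mem hx hy
      zero_mem' := zero_mem S
      neg_mem' := fun hx => hSneg _ hx }
  have hsub : (Subring.closure (G : Set D) : Set D) ⊆ (S : Set D) :=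
    Subring.closure_le (t := Sring) |>.mpr hGS
  -- S is finite: it is contained in the range of φ
  let φ : (↥G → ZMod p) → D := fun n => ∑ g ∈ G.attach, ((n g).val) • (g : D)
  have hadd : ∀ n m, φ n + φ m = φ (n + m) := by
    intro n m
    simp only [φ, ← Finset.sum_add_distrib]
    refine Finset.sum_congr rfl fun g _ => ?_
    rw [← add_nsmul]
    rw [hmod ((n g).val + (m g).val), Pi.add_apply, ZMod.val_add]
  let M0 : AddSubmonoid D :=
    { carrier := Set.range φ
      zero_mem' := ⟨0, by simp [φ]⟩
      add_mem' := by rintro x y ⟨n, rfl⟩ ⟨m, rfl⟩; exact ⟨n + m, (hadd n m).symm⟩ }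
  have hGM : (G : Set D) ⊆ (M0 : Set D) := by
    intro g hg
    classical
    refine ⟨fun h => if h = ⟨g, hg⟩ then 1 else 0, ?_⟩
    simp only [φ]
    rw [Finset.sum_eq_single (⟨g, hg⟩ : ↥G)]
    · rw [if_pos rfl, ZMod.val_one_eq_one_mod, Nat.mod_eq_of_lt hp2, one_nsmul]
    · intro b _ hb; rw [if_neg hb, ZMod.val_zero, zero_nsmul]
    · intro hmem; exact absurd (Finset.mem_attach _ _) hmem
  have hSM : (S : Set D) ⊆ Set.range φ := AddSubmonoid.closure_le (S := M0) |>.mpr hGM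
  exact (Set.finite_range φ).subset (hsub.trans hSM)


lemma exists_mem_apply_eq_zero_of_list_prod {M : Type*} [AddCommMonoid M]
    (l : List (AddMonoid.End M)) (v : M) (hv : v ≠ 0) (h0 : l.prod v = 0) :
    ∃ u ∈ l, ∃ w : M, w ≠ 0 ∧ u w = 0 := by
  induction l with
  | nil => simp only [List.prod_nil, AddMonoid.End.one_apply] at h0; exact absurd h0 hv
  | cons u l' ih =>
    rw [List.prod_cons] at h0
    by_cases hw : l'.prod v = 0
    · obtain ⟨u', hu', w, hw0, huw⟩ := ih hw
      exact ⟨u', List.mem_cons_of_mem _ hu', w, hw0, huw⟩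
    · exact ⟨u, List.mem_cons_self, l'.prod v, hw, h0⟩


theorem divisionRing_comm {D : Type*} [DivisionRing D] {s : ℕ} (hs : 1 < s)
    (h : ∀ x : D, x ^ s = x) (x y : D) : x * y = y * x := by
  have hm : ∀ z : D, z ≠ 0 → z ^ (s - 1) = 1 := by
    intro z hz
    have h1 : z ^ (s - 1) * z = 1 * z := by
      rw [← pow_succ, Nat.sub_add_cancel (by omega), h z, one_mul]
    exact mul_right_cancel₀ hz h1
  by_cases hs2 : s = 2
  · subst hs2
    have hone : ∀ z : D, z ≠ 0 → z = 1 := by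
      intro z hz; simpa using hm z hz
    rcases eq_or_ne x 0 with rfl | hx0
    · simp
    rcases eq_or_ne y 0 with rfl | hy0
    · simp
    rw [hone x hx0, hone y hy0]
  have hs3 : 3 ≤ s := by omega
  by_contra hxy
  classical
  have ha0 : x ≠ 0 := by intro h0; exact hxy (by rw [h0, zero_mul, mul_zero])
  have hy0 : y ≠ 0 := by intro h0; exact hxy (by rw [h0, zero_mul, mul_zero])
  set a : D := x with ha_def
  -- characteristic p, prime
  have h2s : 4 ≤ 2 ^ s := by
    calc (4 : ℕ) = 2 ^ 2 := by norm_num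
    _ ≤ 2 ^ s := Nat.pow_le_pow_right (by norm_num) (by omega)
  set p := ringChar D with hp_def
  haveI hPD : CharP D p := ringChar.charP D
  have hdvd : p ∣ 2 ^ s - 2 := by
    rw [← CharP.cast_eq_zero_iff D p]
    have h2 : ((2 : ℕ) : D) ^ s = ((2 : ℕ) : D) := h _
    have h2' : ((2 ^ s : ℕ) : D) = ((2 : ℕ) : D) := by push_cast; exact_mod_cast h2
    rw [Nat.cast_sub (by omega), h2', sub_self]
  have hp0 : p ≠ 0 := by
    intro h0
    rw [h0, zero_dvd_iff] at hdvd
    omega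
  have hp : p.Prime := (CharP.char_is_prime_or_zero D p).resolve_right hp0
  haveI : Fact p.Prime := ⟨hp⟩
  -- the finite field F generated by a
  set F : Subring D := Subring.closure {a} with hF_def
  have haF : a ∈ F := Subring.subset_closure rfl
  have hcomm_a : ∀ f ∈ F, f * a = a * f := by
    intro f hf
    have hle : F ≤ Subring.centralizer {a} := by
      rw [hF_def]
      apply Subring.closure_le.mpr
      intro z hz
      rw [Set.mem_singleton_iff] at hz
      subst hz
      rw [SetLike.mem_coe, Subring.mem_centralizer_iff]
      intro g hg; rw [Set.mem_singleton_iff] at hg; subst hg; rfl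
    have := hle hf
    rw [Subring.mem_centralizer_iff] at this
    exact (this a rfl).symm
  have hared : ∀ n : ℕ, a ^ n = a ^ (n % (s - 1)) := by
    intro n
    conv_lhs => rw [← Nat.div_add_mod n (s - 1)]
    rw [pow_add, pow_mul, hm a ha0, one_pow, one_mul]
  have hFfin : (F : Set D).Finite := by
    have hGF : Subring.closure ((Finset.image (fun i => a ^ i) (Finset.range (s - 1)) : Finset D) :
        Set D) = F := by
      apply le_antisymm
      · apply Subring.closure_le.mpr
        intro z hz
        simp only [Finset.coe_image, Set.mem_image, Finset.mem_coe, Finset.mem_range] at hz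
        obtain ⟨i, _, rfl⟩ := hz
        exact pow_mem haF i
      · rw [hF_def]
        apply Subring.closure_le.mpr
        intro z hz
        rw [Set.mem_singleton_iff] at hz; subst hz
        rw [SetLike.mem_coe]
        apply Subring.subset_closure
        simp only [Finset.coe_image, Set.mem_image, Finset.mem_coe, Finset.mem_range]
        exact ⟨1, by omega, pow_one a⟩
    rw [← hGF]
    apply finite_closure_of_mulClosed p hp0
    · simp only [Finset.mem_image, Finset.mem_range]
      exact ⟨0, by omega, pow_zero a⟩
    · intro u hu v hv
      simp only [Finset.mem_image, Finset.mem_range] at hu hv ⊢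
      obtain ⟨i, _, rfl⟩ := hu
      obtain ⟨j, _, rfl⟩ := hv
      exact ⟨(i + j) % (s - 1), Nat.mod_lt _ (by omega), by rw [← hared, pow_add]⟩
  haveI : Finite ↥F := hFfin.to_subtype
  letI : Fintype ↥F := Fintype.ofFinite _
  letI commF : CommRing ↥F := Subring.closureCommRingOfComm (by
    intro u hu v hv
    rw [Set.mem_singleton_iff] at hu hv; subst hu; subst hv; rfl)
  haveI : IsDomain ↥F := by infer_instance
  letI fieldF : Field ↥F := (Finite.isDomain_to_isField ↥F).toField
  haveI charF : CharP ↥F p := CharP.subring D p F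
  set q := Fintype.card ↥F with hq_def
  obtain ⟨n, -, hn⟩ := FiniteField.card ↥F p
  have hq2 : 1 < q := Fintype.one_lt_card
  set a' : ↥F := ⟨a, haF⟩ with ha'_def
  have haq : a ^ q = a := by
    have := FiniteField.pow_card a'
    have h2 := congrArg (Subtype.val) this
    simpa [SubmonoidClass.coe_pow] using h2
  -- the endomorphism ring and the inner derivation
  have hEchar : ∀ m : ℕ, ((m : AddMonoid.End D) = 0 ↔ (m : D) = 0) := by
    intro m
    constructor
    · intro h0
      have := congrArg (fun (f : AddMonoid.End D) => f 1) h0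
      simpa [AddMonoid.End.natCast_apply, nsmul_eq_mul] using this
    · intro h0
      refine DFunLike.ext _ _ fun t => ?_
      simp [AddMonoid.End.natCast_apply, nsmul_eq_mul, h0]
  haveI hEcharP : CharP (AddMonoid.End D) p := by
    constructor
    intro m
    rw [hEchar m, CharP.cast_eq_zero_iff D p]
  set La : AddMonoid.End D := AddMonoidHom.mulLeft a with hLa_def
  set Ra : AddMonoid.End D := AddMonoidHom.mulRight a with hRa_def
  set δ : AddMonoid.End D := La - Ra with hδ_def
  have hδapp : ∀ t : D, δ t = a * t - t * a := by
    intro t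
    rw [hδ_def, show (La - Ra) t = La t - Ra t from rfl]
    rfl
  have hcommLR : Commute La Ra := by
    show La * Ra = Ra * La
    refine DFunLike.ext _ _ fun t => ?_
    show a * (t * a) = (a * t) * a
    rw [mul_assoc]
  have hLpow : ∀ k : ℕ, La ^ k = AddMonoidHom.mulLeft (a ^ k) := by
    intro k
    induction k with
    | zero =>
      rw [pow_zero, pow_zero]
      refine DFunLike.ext _ _ fun t => ?_
      show t = 1 * t
      rw [one_mul]
    | succ k ih =>
      rw [pow_succ, ih]
      refine DFunLike.ext _ _ fun t => ?_
      show a ^ k * (a * t) = a ^ (k + 1) * t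
      rw [← mul_assoc, ← pow_succ]
  have hRpow : ∀ k : ℕ, Ra ^ k = AddMonoidHom.mulRight (a ^ k) := by
    intro k
    induction k with
    | zero =>
      rw [pow_zero, pow_zero]
      refine DFunLike.ext _ _ fun t => ?_
      show t = t * 1
      rw [mul_one]
    | succ k ih =>
      rw [pow_succ, ih]
      refine DFunLike.ext _ _ fun t => ?_
      show (t * a) * a ^ k = t * a ^ (k + 1)
      rw [mul_assoc, ← pow_succ']
  have hδq : δ ^ q = δ := by
    rw [hδ_def, hq_def, hn, sub_pow_char_pow_of_commute p (↑n) hcommLR, hLpow, hRpow, ← hn, ← hq_def, haq]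
  have hδy : δ y ≠ 0 := by
    rw [hδapp]
    exact sub_ne_zero_of_ne hxy
  -- the ring hom from F to the endomorphism ring
  set L : ↥F →+* AddMonoid.End D :=
    { toFun := fun f => AddMonoidHom.mulLeft (f : D)
      map_one' := by refine DFunLike.ext _ _ fun t => ?_; show (1 : D) * t = t; rw [one_mul]
      map_mul' := by
        intro f g
        refine DFunLike.ext _ _ fun t => ?_
        show ((f : D) * g) * t = (f : D) * ((g : D) * t)
        rw [mul_assoc]
      map_zero' := by refine DFunLike.ext _ _ fun t => ?_; show (0 : D) * t = 0; rw [zero_mul]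
      map_add' := by
        intro f g
        refine DFunLike.ext _ _ fun t => ?_
        show ((f : D) + g) * t = (f : D) * t + (g : D) * t
        rw [add_mul] } with hL_def
  have hLapp : ∀ (f : ↥F) (t : D), L f t = (f : D) * t := fun _ _ => rfl
  have hcm : ∀ f : ↥F, Commute (L f) δ := by
    intro f
    have h1 : Commute (L f) La := by
      show L f * La = La * L f
      refine DFunLike.ext _ _ fun t => ?_
      show (f : D) * (a * t) = a * ((f : D) * t)
      rw [← mul_assoc, ← mul_assoc, hcomm_a (f : D) f.2]
    have h2 : Commute (L f) Ra := by
      show L f * Ra = Ra * L f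
      refine DFunLike.ext _ _ fun t => ?_
      show (f : D) * (t * a) = ((f : D) * t) * a
      rw [mul_assoc]
    rw [hδ_def]
    exact h1.sub_right h2
  set ε : (↥F)[X] →+* AddMonoid.End D := eval₂RingHom' L δ hcm with hε_def
  have hεX : ε X = δ := eval₂_X _ _
  have hεC : ∀ r : ↥F, ε (C r) = L r := fun r => eval₂_C _ _
  -- the polynomial X^(q-1) - 1 splits over F with the nonzero elements as roots
  have hq10 : q - 1 ≠ 0 := by omega
  set P : (↥F)[X] := X ^ (q - 1) - C 1 with hP_def
  have hPdeg : P.natDegree = q - 1 := natDegree_X_pow_sub_C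
  have hPmonic : P.Monic := monic_X_pow_sub_C 1 hq10
  have hPne : P ≠ 0 := hPmonic.ne_zero
  have hroot : ∀ z : ↥F, z ≠ 0 → P.IsRoot z := by
    intro z hz
    show P.eval z = 0
    rw [hP_def, eval_sub, eval_pow, eval_X, eval_C,
      FiniteField.pow_card_sub_one_eq_one z hz, sub_self]
  have hcard : P.roots.card = q - 1 := by
    apply le_antisymm
    · simpa [hPdeg] using P.card_roots'
    · have hsub2 : (Finset.univ.erase (0 : ↥F)) ⊆ P.roots.toFinset := by
        intro z hz
        rw [Finset.mem_erase] at hz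
        rw [Multiset.mem_toFinset, mem_roots hPne]
        exact hroot z hz.1
      calc q - 1 = (Finset.univ.erase (0 : ↥F)).card := by
            rw [Finset.card_erase_of_mem (Finset.mem_univ 0), Finset.card_univ]
      _ ≤ P.roots.toFinset.card := Finset.card_le_card hsub2
      _ ≤ P.roots.card := P.roots.toFinset_card_le
  have hfac : (P.roots.map fun r => X - C r).prod = P := by
    have := C_leadingCoeff_mul_prod_multiset_X_sub_C (p := P) (by rw [hcard, hPdeg])
    rwa [hPmonic.leadingCoeff, map_one, one_mul] at this
  set l : List ↥F := P.roots.toList with hl_def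
  have hlco : (↑l : Multiset ↥F) = P.roots := Multiset.coe_toList _
  have hlprod : ((l.map fun r => X - C r)).prod = P := by
    rw [← hfac, ← hlco, Multiset.map_coe, Multiset.prod_coe]
  have hop : ((l.map fun r => δ - L r)).prod = δ ^ (q - 1) - 1 := by
    have h1 : ε P = δ ^ (q - 1) - 1 := by
      rw [hP_def, Polynomial.C_1, map_sub, map_pow, hεX, map_one]
    rw [← hlprod] at h1
    rw [map_list_prod ε] at h1
    rw [List.map_map] at h1
    have h2 : (fun r => δ - L r) = ε ∘ (fun r => X - C r) := by
      funext r
      show δ - L r = ε (X - C r)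
      rw [map_sub, hεX, hεC]
    rw [h2]
    exact h1
  have happ : ((l.map fun r => δ - L r)).prod (δ y) = 0 := by
    rw [hop]
    have hpq : δ ^ (q - 1) * δ = δ ^ q := by
      rw [← pow_succ]
      congr 1
      omega
    have h1 : (δ ^ (q - 1)) (δ y) = δ y := by
      calc (δ ^ (q - 1)) (δ y) = (δ ^ (q - 1) * δ) y := rfl
      _ = (δ ^ q) y := by rw [hpq]
      _ = δ y := by rw [hδq]
    rw [show (δ ^ (q - 1) - 1) (δ y) = (δ ^ (q - 1)) (δ y) - (1 : AddMonoid.End D) (δ y) from rfl, h1, AddMonoid.End.one_apply, sub_self]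
  obtain ⟨u, hu, w, hw0, huw⟩ := exists_mem_apply_eq_zero_of_list_prod _ (δ y) hδy happ
  rw [List.mem_map] at hu
  obtain ⟨r, hrl, rfl⟩ := hu
  have hrP : P.IsRoot r := by
    have : r ∈ P.roots := by rw [← hlco]; exact Multiset.mem_coe.mpr hrl
    exact (mem_roots hPne).mp this
  have hr0 : r ≠ 0 := by
    intro h0
    subst h0
    have : P.eval 0 = 0 := hrP
    rw [hP_def, eval_sub, eval_pow, eval_X, eval_C, zero_pow hq10, zero_sub, neg_eq_zero] at this
    exact one_ne_zero this
  have hrD : (r : D) ≠ 0 := fun h0 => hr0 (Subtype.ext h0)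
  have heig : δ w = (r : D) * w := by
    rw [show (δ - L r) w = δ w - L r w from rfl, sub_eq_zero] at huw
    rw [huw]
    rfl
  have hwa : w * a * w⁻¹ = a - (r : D) := by
    have h1 : a * w - w * a = (r : D) * w := by rw [← hδapp, heig]
    rw [sub_eq_iff_eq_add] at h1
    have h2 : w * a = (a - (r : D)) * w := by
      rw [sub_mul, eq_sub_iff_add_eq]
      exact (add_comm _ _).trans h1.symm
    calc w * a * w⁻¹ = ((a - (r : D)) * w) * w⁻¹ := by rw [h2]
    _ = (a - (r : D)) * (w * w⁻¹) := by rw [mul_assoc]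
    _ = a - (r : D) := by rw [mul_inv_cancel₀ hw0, mul_one]
  -- conjugation by w preserves F
  set φ : D →+* D :=
    { toFun := fun t => w * t * w⁻¹
      map_one' := by show w * 1 * w⁻¹ = 1; rw [mul_one, mul_inv_cancel₀ hw0]
      map_mul' := by
        intro t u
        show w * (t * u) * w⁻¹ = (w * t * w⁻¹) * (w * u * w⁻¹)
        simp only [mul_assoc]
        rw [inv_mul_cancel_left₀ hw0]
      map_zero' := by show w * 0 * w⁻¹ = 0; rw [mul_zero, zero_mul]
      map_add' := by
        intro t u
        show w * (t + u) * w⁻¹ = w * t * w⁻¹ + w * u * w⁻¹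
        rw [mul_add, add_mul] } with hφ_def
  have hφa : φ a ∈ F := by
    show w * a * w⁻¹ ∈ F
    rw [hwa]
    exact sub_mem haF (SetLike.coe_mem r)
  have hφF : ∀ f ∈ F, φ f ∈ F := by
    intro f hf
    have hle : F ≤ F.comap φ := by
      rw [hF_def]
      apply Subring.closure_le.mpr
      intro z hz
      rw [Set.mem_singleton_iff] at hz
      subst hz
      rw [SetLike.mem_coe, Subring.mem_comap]
      exact hφa
    exact Subring.mem_comap.mp (hle hf)
  have hconj : ∀ i : ℕ, ∀ f ∈ F, ∃ g ∈ F, w ^ i * f = g * w ^ i := by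
    intro i
    induction i with
    | zero => intro f hf; exact ⟨f, hf, by rw [pow_zero, one_mul, mul_one]⟩
    | succ i ih =>
      intro f hf
      obtain ⟨g, hg, hgf⟩ := ih f hf
      refine ⟨φ g, hφF g hg, ?_⟩
      have hgw : w * g = φ g * w := by
        show w * g = (w * g * w⁻¹) * w
        rw [mul_assoc, inv_mul_cancel₀ hw0, mul_one]
      calc w ^ (i+1) * f = w * (w ^ i * f) := by rw [pow_succ', mul_assoc]
      _ = w * (g * w ^ i) := by rw [hgf]
      _ = (w * g) * w ^ i := by rw [mul_assoc]
      _ = (φ g * w) * w ^ i := by rw [hgw]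
      _ = φ g * w ^ (i+1) := by rw [mul_assoc, ← pow_succ']
  -- the finite subring generated by F and w
  have hwred : ∀ k : ℕ, w ^ k = w ^ (k % (s-1)) := by
    intro k
    conv_lhs => rw [← Nat.div_add_mod k (s-1)]
    rw [pow_add, pow_mul, hm w hw0, one_pow, one_mul]
  set Ffin := hFfin.toFinset with hFfin_def
  have hmemF : ∀ z : D, z ∈ Ffin ↔ z ∈ F := fun z => Set.Finite.mem_toFinset _
  set H : Finset D := Finset.image₂ (fun f i => f * w ^ i) Ffin (Finset.range (s-1)) with hH_def
  have hmemH : ∀ z : D, (∃ f ∈ F, ∃ i < s - 1, f * w ^ i = z) → z ∈ H := by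
    intro z ⟨f, hf, i, hi, hz⟩
    rw [hH_def]
    exact Finset.mem_image₂.mpr ⟨f, (hmemF f).mpr hf, i, Finset.mem_range.mpr hi, hz⟩
  have h1H : (1 : D) ∈ H := by
    refine hmemH 1 ⟨1, one_mem F, 0, by omega, by rw [pow_zero, mul_one]⟩
  have hmulH : ∀ u ∈ H, ∀ v ∈ H, u * v ∈ H := by
    intro u hu v hv
    rw [hH_def] at hu hv
    obtain ⟨f, hf, i, hi, rfl⟩ := Finset.mem_image₂.mp hu
    obtain ⟨g, hg, j, hj, rfl⟩ := Finset.mem_image₂.mp hv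
    rw [hmemF] at hf hg
    obtain ⟨g', hg', hgw⟩ := hconj i g hg
    refine hmemH _ ⟨f * g', mul_mem hf hg', (i + j) % (s-1), Nat.mod_lt _ (by omega), ?_⟩
    rw [← hwred, pow_add]
    calc f * g' * (w ^ i * w ^ j) = f * (g' * w ^ i) * w ^ j := by
          rw [mul_assoc, mul_assoc, mul_assoc]
    _ = f * (w ^ i * g) * w ^ j := by rw [hgw]
    _ = f * w ^ i * (g * w ^ j) := by rw [mul_assoc, mul_assoc, mul_assoc]
  set T : Subring D := Subring.closure (H : Set D) with hT_def
  have haT : a ∈ T := by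
    apply Subring.subset_closure
    rw [Finset.mem_coe]
    exact hmemH a ⟨a, haF, 0, by omega, by rw [pow_zero, mul_one]⟩
  have hwT : w ∈ T := by
    apply Subring.subset_closure
    rw [Finset.mem_coe]
    exact hmemH w ⟨1, one_mem F, 1, by omega, by rw [pow_one, one_mul]⟩
  have hTfin : ((T : Set D)).Finite := finite_closure_of_mulClosed p hp0 H h1H hmulH
  haveI : Finite ↥T := hTfin.to_subtype
  haveI : IsDomain ↥T := by infer_instance
  have hfield := Finite.isDomain_to_isField ↥T
  have hcomm2 := hfield.mul_comm ⟨a, haT⟩ ⟨w, hwT⟩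
  have haw : a * w = w * a := congrArg Subtype.val hcomm2
  have hfin : w * a * w⁻¹ = a := by
    rw [← haw, mul_assoc, mul_inv_cancel₀ hw0, mul_one]
  rw [hwa] at hfin
  have : (r : D) = 0 := by
    have := sub_eq_self.mp hfin
    exact this
  exact hrD this


theorem ring_comm {Q : Type*} [Ring Q] {s : ℕ} (hs : 1 < s) (h : ∀ x : Q, x ^ s = x)
    (a b : Q) : a * b = b * a := by
  by_contra hab
  classical
  set c : Q := a * b - b * a with hc_def
  have hc0 : c ≠ 0 := sub_ne_zero_of_ne hab
  -- Zorn's lemma: a two-sided ideal maximal with respect to not containing c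
  have hchainub : ∀ ch ⊆ {I : TwoSidedIdeal Q | c ∉ I}, IsChain (· ≤ ·) ch → ∀ J ∈ ch,
      ∃ ub ∈ {I : TwoSidedIdeal Q | c ∉ I}, ∀ z ∈ ch, z ≤ ub := by
    intro ch hch hchain J hJ
    have hmem : ∀ z : Q, z ∈ (⋃ I ∈ ch, (I : Set Q)) ↔ ∃ I ∈ ch, z ∈ I := by
      intro z
      simp only [Set.mem_iUnion₂, SetLike.mem_coe, exists_prop]
    refine ⟨TwoSidedIdeal.mk' (⋃ I ∈ ch, (I : Set Q))
      ((hmem 0).mpr ⟨J, hJ, zero_mem J⟩)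
      (fun {z w} hz hw => ?_) (fun {z} hz => ?_) (fun {z w} hw => ?_) (fun {z w} hz => ?_),
      ?_, ?_⟩
    · obtain ⟨I1, hI1, hzI⟩ := (hmem z).mp hz
      obtain ⟨I2, hI2, hwI⟩ := (hmem w).mp hw
      rcases eq_or_ne I1 I2 with rfl | hne
      · exact (hmem _).mpr ⟨I1, hI1, add_mem hzI hwI⟩
      rcases hchain hI1 hI2 hne with hle | hle
      · exact (hmem _).mpr ⟨I2, hI2, add_mem (hle hzI) hwI⟩
      · exact (hmem _).mpr ⟨I1, hI1, add_mem hzI (hle hwI)⟩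
    · obtain ⟨I1, hI1, hzI⟩ := (hmem z).mp hz
      exact (hmem _).mpr ⟨I1, hI1, neg_mem hzI⟩
    · obtain ⟨I1, hI1, hwI⟩ := (hmem w).mp hw
      exact (hmem _).mpr ⟨I1, hI1, I1.mul_mem_left _ _ hwI⟩
    · obtain ⟨I1, hI1, hzI⟩ := (hmem z).mp hz
      exact (hmem _).mpr ⟨I1, hI1, I1.mul_mem_right _ _ hzI⟩
    · -- c not in the union
      intro hcmem
      rw [TwoSidedIdeal.mem_mk'] at hcmem
      obtain ⟨I1, hI1, hcI⟩ := (hmem c).mp hcmem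
      exact hch hI1 hcI
    · -- upper bound
      intro z hz
      rw [TwoSidedIdeal.le_iff]
      intro t ht
      rw [SetLike.mem_coe, TwoSidedIdeal.mem_mk']
      exact (hmem t).mpr ⟨z, hz, ht⟩
  obtain ⟨Imax, -, hmax⟩ := zorn_le_nonempty₀ {I : TwoSidedIdeal Q | c ∉ I} hchainub
    ⊥ (by simpa [TwoSidedIdeal.mem_bot] using hc0)
  have hcI : c ∉ Imax := hmax.1
  set π : Q →+* Imax.ringCon.Quotient := Imax.ringCon.mk' with hπ_def
  have hπs : Function.Surjective π := by
    intro z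
    induction z using Quotient.inductionOn' with
    | h t => exact ⟨t, rfl⟩
  have hπ0 : ∀ z : Q, π z = 0 ↔ z ∈ Imax := by
    intro z
    have h1 : π z = π 0 ↔ Imax.ringCon z 0 := Imax.ringCon.eq
    rw [map_zero] at h1
    rw [h1]
    exact (TwoSidedIdeal.mem_iff _ _).symm
  have hDpow : ∀ z : Imax.ringCon.Quotient, z ^ s = z := by
    intro z
    obtain ⟨t, rfl⟩ := hπs z
    rw [← map_pow, h t]
  have hcD : π c ≠ 0 := fun h0 => hcI ((hπ0 c).mp h0)
  haveI hnt : Nontrivial Imax.ringCon.Quotient := ⟨⟨π c, 0, hcD⟩⟩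
  have hred : ∀ z : Imax.ringCon.Quotient, z * z = 0 → z = 0 := by
    intro z hz
    have hs2 : s - 2 + 2 = s := by omega
    calc z = z ^ s := (hDpow z).symm
    _ = z ^ (s - 2) * (z * z) := by rw [← pow_two, ← pow_add, hs2]
    _ = 0 := by rw [hz, mul_zero]
  have hkey : ∀ J : TwoSidedIdeal Q, Imax ≤ J → c ∉ J → J = Imax := by
    intro J hIJ hcJ
    exact le_antisymm (hmax.2 hcJ hIJ) hIJ
  -- the quotient is a domain
  have hdom : ∀ u v : Imax.ringCon.Quotient, u * v = 0 → u = 0 ∨ v = 0 := by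
    intro u v huv
    by_contra hbc
    push_neg at hbc
    obtain ⟨hu, hv⟩ := hbc
    obtain ⟨u', rfl⟩ := hπs u
    obtain ⟨v', rfl⟩ := hπs v
    have hvu : π v' * π u' = 0 := by
      apply hred
      calc (π v' * π u') * (π v' * π u') = π v' * ((π u' * π v') * π u') := by
            simp only [mul_assoc]
      _ = 0 := by rw [huv, zero_mul, mul_zero]
    have huxv : ∀ t : Imax.ringCon.Quotient, π u' * t * π v' = 0 := by
      intro t
      apply hred
      calc (π u' * t * π v') * (π u' * t * π v')
          = (π u' * t) * ((π v' * π u') * (t * π v')) := by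
            simp only [mul_assoc]
      _ = 0 := by rw [hvu, zero_mul, mul_zero]
    -- the ideal K1
    set K1 : TwoSidedIdeal Q := TwoSidedIdeal.mk'
      {z : Q | ∀ t : Imax.ringCon.Quotient, π z * t * π v' = 0}
      (fun t => by rw [map_zero, zero_mul, zero_mul])
      (fun {z w} hz hw t => by rw [map_add, add_mul, add_mul, hz t, hw t, add_zero])
      (fun {z} hz t => by rw [map_neg, neg_mul, neg_mul, hz t, neg_zero])
      (fun {z w} hw t => by
        rw [map_mul, mul_assoc, mul_assoc, ← mul_assoc (π w)]
        rw [show π w * t * π v' = 0 from hw t, mul_zero])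
      (fun {z w} hz t => by
        rw [map_mul, mul_assoc (π z)]
        exact hz (π w * t)) with hK1_def
    have hmemK1 : ∀ z : Q, z ∈ K1 ↔ ∀ t, π z * t * π v' = 0 := fun z =>
      TwoSidedIdeal.mem_mk' _ _ _ _ _ _ z
    have hIK1 : Imax ≤ K1 := by
      rw [TwoSidedIdeal.le_iff]
      intro z hz
      rw [SetLike.mem_coe, hmemK1]
      intro t
      rw [(hπ0 z).mpr hz, zero_mul, zero_mul]
    have hu'K1 : u' ∈ K1 := (hmemK1 u').mpr huxv
    have hcK1 : c ∈ K1 := by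
      by_contra hcK
      have := hkey K1 hIK1 hcK
      rw [this] at hu'K1
      exact hu ((hπ0 u').mpr hu'K1)
    have hc1 : ∀ t, π c * t * π v' = 0 := (hmemK1 c).mp hcK1
    -- the ideal K2
    set K2 : TwoSidedIdeal Q := TwoSidedIdeal.mk'
      {z : Q | ∀ t : Imax.ringCon.Quotient, π c * t * π z = 0}
      (fun t => by rw [map_zero, mul_zero])
      (fun {z w} hz hw t => by rw [map_add, mul_add, hz t, hw t, add_zero])
      (fun {z} hz t => by rw [map_neg, mul_neg, hz t, neg_zero])
      (fun {z w} hw t => by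
        rw [map_mul, ← mul_assoc, mul_assoc (π c) t (π z)]
        exact hw (t * π z))
      (fun {z w} hz t => by
        rw [map_mul, ← mul_assoc, hz t, zero_mul]) with hK2_def
    have hmemK2 : ∀ z : Q, z ∈ K2 ↔ ∀ t, π c * t * π z = 0 := fun z =>
      TwoSidedIdeal.mem_mk' _ _ _ _ _ _ z
    have hIK2 : Imax ≤ K2 := by
      rw [TwoSidedIdeal.le_iff]
      intro z hz
      rw [SetLike.mem_coe, hmemK2]
      intro t
      rw [(hπ0 z).mpr hz, mul_zero]
    have hv'K2 : v' ∈ K2 := (hmemK2 v').mpr hc1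
    have hcK2 : c ∈ K2 := by
      by_contra hcK
      have := hkey K2 hIK2 hcK
      rw [this] at hv'K2
      exact hv ((hπ0 v').mpr hv'K2)
    have hc2 := (hmemK2 c).mp hcK2 1
    rw [mul_one] at hc2
    exact hcD (hred _ hc2)
  -- the quotient is a division ring
  letI : DivisionRing Imax.ringCon.Quotient := DivisionRing.ofIsUnitOrEqZero (by
    intro z
    by_cases hz : z = 0
    · exact Or.inr hz
    refine Or.inl ?_
    have h1 : z ^ (s - 1) = 1 := by
      have h2 : (z ^ (s - 1) - 1) * z = 0 := by
        rw [sub_mul, one_mul, ← pow_succ, show s - 1 + 1 = s by omega, hDpow z, sub_self]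
      rcases hdom _ _ h2 with h3 | h3
      · exact sub_eq_zero.mp h3
      · exact absurd h3 hz
    refine ⟨⟨z, z ^ (s - 2), ?_, ?_⟩, rfl⟩
    · rw [← pow_succ', show s - 2 + 1 = s - 1 by omega, h1]
    · rw [← pow_succ, show s - 2 + 1 = s - 1 by omega, h1])
  have hDcomm := divisionRing_comm hs hDpow (π a) (π b)
  apply hcD
  rw [hc_def, map_sub, map_mul, map_mul, hDcomm, sub_self]


/-- If there is an integer s > 1 with x^s ≡ x (mod A) for all x ∈ R, then the
quotient ring R/A is commutative. -/
theorem quotient_commutative_of_pow_congr {R : Type*} [Ring R] (A : TwoSidedIdeal R)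
    (s : ℕ) (hs : 1 < s) (h : ∀ x : R, x ^ s - x ∈ A) :
    ∀ a b : A.ringCon.Quotient, a * b = b * a := by
  have hQ : ∀ z : A.ringCon.Quotient, z ^ s = z := by
    have hπs : Function.Surjective A.ringCon.mk' := by
      intro z
      induction z using Quotient.inductionOn' with
      | h t => exact ⟨t, rfl⟩
    intro z
    obtain ⟨t, rfl⟩ := hπs z
    rw [← map_pow]
    exact A.ringCon.eq.mpr ((TwoSidedIdeal.rel_iff A _ _).mpr (h t))
  exact fun a b => ring_comm hs hQ a b
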